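/- Let A + λB ∈ ℂ[λ]₁^{n×n} and define f(Q,Z) = Σ_{i>j}(|(QAZ)_{ij}|² + |(QBZ)_{ij}|²) + min_{1≤i≤n}(|(QAZ)_{ii}|² + |(QBZ)_{ii}|²) for (Q,Z) ∈ U(n)×U(n). Then min over all singular pencils S + λT of ‖(A−S) + λ(B−T)‖_F² equals min over (Q,Z) ∈ U(n)×U(n) of f(Q,Z). -/

import Mathlib

open Polynomial Matrix Module

noncomputable def pencilPoly {n : ℕ} (A B : Matrix (Fin n) (Fin n) ℂ) :
    Matrix (Fin n) (Fin n) (Polynomial ℂ) :=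
  Matrix.of fun i j => C (A i j) + X * C (B i j)

noncomputable def pencilNormSq {n : ℕ} (A B : Matrix (Fin n) (Fin n) ℂ) : ℝ :=
  (∑ i, ∑ j, ‖A i j‖ ^ 2) + ∑ i, ∑ j, ‖B i j‖ ^ 2

/-- The objective function `f(Q,Z)` : sum of squared moduli of the strictly lower
triangular entries of `QAZ, QBZ` plus the minimal squared modulus of a diagonal pair. -/
noncomputable def objFun {n : ℕ} (hn : 0 < n) (A B Q Z : Matrix (Fin n) (Fin n) ℂ) : ℝ :=
  (∑ i, ∑ j, if j < i then ‖(Q * A * Z) i j‖ ^ 2 + ‖(Q * B * Z) i j‖ ^ 2 else 0) +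
    Finset.univ.inf' ⟨⟨0, hn⟩, Finset.mem_univ _⟩
      (fun i => ‖(Q * A * Z) i i‖ ^ 2 + ‖(Q * B * Z) i i‖ ^ 2)

section Aux

variable {m n : ℕ}

/-! ### Unitary matrices with a prescribed column -/

lemma exists_unitary_col (z : EuclideanSpace ℂ (Fin m)) (hz : ‖z‖ = 1) (k : Fin m) :
    ∃ Z : Matrix (Fin m) (Fin m) ℂ, Z ∈ Matrix.unitaryGroup (Fin m) ℂ ∧ ∀ i, Z i k = z i := by
  have hcard : finrank ℂ (EuclideanSpace ℂ (Fin m)) = Fintype.card (Fin m) := by simp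
  have horth : Orthonormal ℂ (({k} : Set (Fin m)).restrict (fun _ => z)) := by
    rw [orthonormal_iff_ite]
    rintro ⟨i, hi⟩ ⟨j, hj⟩
    simp only [Set.mem_singleton_iff] at hi hj
    subst hi; subst hj
    simp [Set.restrict, inner_self_eq_norm_sq_to_K, hz]
  obtain ⟨b, hb⟩ := horth.exists_orthonormalBasis_extension_of_card_eq hcard
  refine ⟨Matrix.of fun i j => b j i, ?_, fun i => ?_⟩
  · rw [Matrix.mem_unitaryGroup_iff']
    ext j l
    have := b.orthonormal
    rw [orthonormal_iff_ite] at this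
    have h := this j l
    rw [PiLp.inner_apply] at h
    simpa [Matrix.mul_apply, Matrix.one_apply, mul_comm] using h
  · rw [Matrix.of_apply, hb k rfl]

/-! ### A singular direction for a pencil -/

lemma exists_pair_det_zero (S T : Matrix (Fin (m+1)) (Fin (m+1)) ℂ) :
    ∃ a b : ℂ, ¬(a = 0 ∧ b = 0) ∧ (a • S + b • T).det = 0 := by
  by_cases hT : T.det = 0
  · exact ⟨0, 1, by simp, by simpa using hT⟩
  · have hU : IsUnit T.det := isUnit_iff_ne_zero.mpr hT
    set M := T⁻¹ * S with hM
    have hdeg : (0:WithBot ℕ) < M.charpoly.degree := by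
      rw [Matrix.charpoly_degree_eq_dim]
      rw [Fintype.card_fin]; exact_mod_cast Nat.succ_pos m
    obtain ⟨μ, hμ⟩ := Complex.exists_root hdeg
    have h1 : (μ • (1 : Matrix (Fin (m+1)) (Fin (m+1)) ℂ) - M).det = 0 := by
      rw [Polynomial.IsRoot.def, Matrix.charpoly] at hμ
      have h2 : Polynomial.eval μ (charmatrix M).det
          = ((charmatrix M).map (Polynomial.evalRingHom μ)).det := by
        exact RingHom.map_det (evalRingHom μ) M.charmatrix
      have h3 : (charmatrix M).map (Polynomial.evalRingHom μ)
          = μ • (1 : Matrix (Fin (m+1)) (Fin (m+1)) ℂ) - M := by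
        ext i j
        by_cases hij : i = j
        · subst hij; simp [charmatrix_apply_eq]
        · simp [charmatrix_apply_ne _ _ _ hij, Matrix.one_apply_ne hij]
      rw [h2, h3] at hμ
      exact hμ
    refine ⟨-1, μ, by simp, ?_⟩
    have h2 : T * (μ • (1 : Matrix (Fin (m+1)) (Fin (m+1)) ℂ) - M) = (-1 : ℂ) • S + μ • T := by
      rw [Matrix.mul_sub, Matrix.mul_smul, mul_one, hM, ← Matrix.mul_assoc,
        Matrix.mul_nonsing_inv T hU, Matrix.one_mul, neg_smul, one_smul]
      abel
    rw [← h2, Matrix.det_mul, h1, mul_zero]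

/-- A common unit vector spanning `S z` and `T z` for a suitable unit vector `z`. -/
lemma exists_common_dir (S T : Matrix (Fin (m+1)) (Fin (m+1)) ℂ) :
    ∃ (z w : EuclideanSpace ℂ (Fin (m+1))) (s t : ℂ), ‖z‖ = 1 ∧ ‖w‖ = 1 ∧
      S.mulVec z = s • (w : Fin (m+1) → ℂ) ∧ T.mulVec z = t • (w : Fin (m+1) → ℂ) := by
  obtain ⟨a, b, hab, hdet⟩ := exists_pair_det_zero S T
  obtain ⟨v, hv0, hker⟩ := (Matrix.exists_mulVec_eq_zero_iff).mpr hdet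
  set v' : EuclideanSpace ℂ (Fin (m+1)) := WithLp.toLp 2 v with hv'
  have hv'0 : v' ≠ 0 := by
    intro h; apply hv0; have := congrArg WithLp.ofLp h; rw [hv'] at this; simpa using this
  set z : EuclideanSpace ℂ (Fin (m+1)) := ((‖v'‖ : ℂ)⁻¹) • v' with hzdef
  have hz1 : ‖z‖ = 1 := by
    rw [hzdef, norm_smul]
    simp [norm_ne_zero_iff.mpr hv'0]
  have hkerz : (a • S + b • T).mulVec z = 0 := by
    have : (a • S + b • T).mulVec (z : Fin (m+1) → ℂ)
        = ((‖v'‖ : ℂ)⁻¹) • (a • S + b • T).mulVec v := by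
      rw [hzdef]
      exact (Matrix.mulVec_smul _ _ _)
    rw [this, hker, smul_zero]
  have hdep : a • S.mulVec z + b • T.mulVec z = 0 := by
    rw [← Matrix.smul_mulVec, ← Matrix.smul_mulVec, ← Matrix.add_mulVec]
    exact hkerz
  by_cases hTz : T.mulVec z = 0
  · by_cases hSz : S.mulVec z = 0
    · refine ⟨z, EuclideanSpace.single 0 1, 0, 0, hz1, by simp, by simp [hSz], by simp [hTz]⟩
    · set w' : EuclideanSpace ℂ (Fin (m+1)) := WithLp.toLp 2 (S.mulVec z) with hw'
      have hw'0 : w' ≠ 0 := by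
        intro h; apply hSz; have := congrArg WithLp.ofLp h; rw [hw'] at this; simpa using this
      refine ⟨z, ((‖w'‖ : ℂ)⁻¹) • w', (‖w'‖ : ℂ), 0, hz1, ?_, ?_, by simp [hTz]⟩
      · rw [norm_smul]; simp [norm_ne_zero_iff.mpr hw'0]
      · rw [WithLp.ofLp_smul (x := w'), smul_smul]
        rw [mul_inv_cancel₀ (by exact_mod_cast norm_ne_zero_iff.mpr hw'0), one_smul]
  · have ha : a ≠ 0 := by
      rintro rfl
      have hb : b ≠ 0 := fun hb => hab ⟨rfl, hb⟩
      apply hTz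
      have := hdep
      rw [zero_smul, zero_add] at this
      rcases smul_eq_zero.mp this with h | h
      · exact absurd h hb
      · exact h
    have hSz : S.mulVec z = (-(b/a)) • T.mulVec z := by
      have : a • S.mulVec z = -(b • T.mulVec z) := by
        rw [← add_eq_zero_iff_eq_neg]; exact hdep
      calc S.mulVec z = (a⁻¹ * a) • S.mulVec z := by
            rw [inv_mul_cancel₀ ha, one_smul]
        _ = a⁻¹ • (a • S.mulVec z) := (smul_smul _ _ _).symm
        _ = a⁻¹ • (-(b • T.mulVec z)) := by rw [this]
        _ = (-(b/a)) • T.mulVec z := by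
            rw [smul_neg, smul_smul, ← neg_smul]
            congr 1
            field_simp
    set w' : EuclideanSpace ℂ (Fin (m+1)) := WithLp.toLp 2 (T.mulVec z) with hw'
    have hw'0 : w' ≠ 0 := by
      intro h; apply hTz; have := congrArg WithLp.ofLp h; rw [hw'] at this; simpa using this
    refine ⟨z, ((‖w'‖ : ℂ)⁻¹) • w', (-(b/a)) * (‖w'‖ : ℂ), (‖w'‖ : ℂ), hz1, ?_, ?_, ?_⟩
    · rw [norm_smul]; simp [norm_ne_zero_iff.mpr hw'0]
    · rw [hSz, WithLp.ofLp_smul (x := w'), smul_smul, mul_assoc,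
        mul_inv_cancel₀ (by exact_mod_cast norm_ne_zero_iff.mpr hw'0 : (‖w'‖:ℂ) ≠ 0), mul_one]
    · rw [WithLp.ofLp_smul (x := w'), smul_smul, mul_inv_cancel₀ (by exact_mod_cast norm_ne_zero_iff.mpr hw'0), one_smul]

/-- First-column deflation step. -/
lemma exists_firstcol (S T : Matrix (Fin (m+1)) (Fin (m+1)) ℂ) :
    ∃ Q Z : Matrix (Fin (m+1)) (Fin (m+1)) ℂ,
      Q ∈ Matrix.unitaryGroup (Fin (m+1)) ℂ ∧ Z ∈ Matrix.unitaryGroup (Fin (m+1)) ℂ ∧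
      ∀ i : Fin (m+1), i ≠ 0 → (Q * S * Z) i 0 = 0 ∧ (Q * T * Z) i 0 = 0 := by
  obtain ⟨z, w, s, t, hz1, hw1, hSz, hTz⟩ := exists_common_dir S T
  obtain ⟨Z, hZ, hZcol⟩ := exists_unitary_col z hz1 0
  obtain ⟨W, hW, hWcol⟩ := exists_unitary_col w hw1 0
  refine ⟨star W, Z, Unitary.star_mem hW, hZ, fun i hi => ?_⟩
  have hQw : (star W).mulVec (w : Fin (m+1) → ℂ)
      = fun i => (1 : Matrix (Fin (m+1)) (Fin (m+1)) ℂ) i 0 := by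
    funext i
    have h1 : star W * W = 1 := (Matrix.mem_unitaryGroup_iff').mp hW
    calc (star W).mulVec (w : Fin (m+1) → ℂ) i = ∑ k, (star W) i k * W k 0 := by
          simp only [Matrix.mulVec, dotProduct]
          exact Finset.sum_congr rfl fun k _ => by rw [hWcol k]
      _ = (star W * W) i 0 := (Matrix.mul_apply).symm
      _ = (1 : Matrix (Fin (m+1)) (Fin (m+1)) ℂ) i 0 := by rw [h1]
  have key : ∀ (M : Matrix (Fin (m+1)) (Fin (m+1)) ℂ) (c : ℂ),
      M.mulVec (z : Fin (m+1) → ℂ) = c • (w : Fin (m+1) → ℂ) →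
      (star W * M * Z) i 0 = 0 := by
    intro M c hMz
    have h3 : (star W * M * Z) i 0 = ((star W * M).mulVec fun k => Z k 0) i := by
      simp only [Matrix.mulVec, dotProduct, Matrix.mul_apply]
    rw [h3]
    have h4 : (fun k => Z k 0) = (z : Fin (m+1) → ℂ) := funext hZcol
    rw [h4, ← Matrix.mulVec_mulVec, hMz, Matrix.mulVec_smul, hQw]
    simp [Matrix.one_apply, hi]
  exact ⟨key S s hSz, key T t hTz⟩

/-! ### Embedding of a matrix as the lower-right block of `1 ⊕ U` -/

def emb (U : Matrix (Fin m) (Fin m) ℂ) : Matrix (Fin (m+1)) (Fin (m+1)) ℂ :=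
  Matrix.of (Fin.cons (Fin.cons 1 0) (fun i => Fin.cons 0 (U i)))

@[simp] lemma emb_zero_zero (U : Matrix (Fin m) (Fin m) ℂ) : emb U 0 0 = 1 := rfl
@[simp] lemma emb_zero_succ (U : Matrix (Fin m) (Fin m) ℂ) (j : Fin m) :
    emb U 0 j.succ = 0 := by simp [emb]
@[simp] lemma emb_succ_zero (U : Matrix (Fin m) (Fin m) ℂ) (i : Fin m) :
    emb U i.succ 0 = 0 := by simp [emb]
@[simp] lemma emb_succ_succ (U : Matrix (Fin m) (Fin m) ℂ) (i j : Fin m) :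
    emb U i.succ j.succ = U i j := by simp [emb]

lemma emb_mul (U V : Matrix (Fin m) (Fin m) ℂ) : emb (U * V) = emb U * emb V := by
  ext i j
  refine Fin.cases ?_ (fun i' => ?_) i <;> refine Fin.cases ?_ (fun j' => ?_) j <;>
    simp [Matrix.mul_apply, Fin.sum_univ_succ]

@[simp] lemma emb_one : emb (1 : Matrix (Fin m) (Fin m) ℂ) = 1 := by
  ext i j
  refine Fin.cases ?_ (fun i' => ?_) i <;> refine Fin.cases ?_ (fun j' => ?_) j <;>
    simp [Matrix.one_apply, Fin.succ_ne_zero, (Fin.succ_ne_zero _).symm, Fin.succ_inj]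

lemma star_emb (U : Matrix (Fin m) (Fin m) ℂ) : star (emb U) = emb (star U) := by
  ext i j
  refine Fin.cases ?_ (fun i' => ?_) i <;> refine Fin.cases ?_ (fun j' => ?_) j <;>
    simp [Matrix.star_apply]

lemma emb_mem {U : Matrix (Fin m) (Fin m) ℂ} (hU : U ∈ Matrix.unitaryGroup (Fin m) ℂ) :
    emb U ∈ Matrix.unitaryGroup (Fin (m+1)) ℂ := by
  rw [Matrix.mem_unitaryGroup_iff']
  rw [star_emb, ← emb_mul, (Matrix.mem_unitaryGroup_iff').mp hU, emb_one]

lemma emb_mul_mul_succ_zero (Q' Z' : Matrix (Fin m) (Fin m) ℂ)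
    (M : Matrix (Fin (m+1)) (Fin (m+1)) ℂ) (hM : ∀ i : Fin m, M i.succ 0 = 0) (i : Fin m) :
    (emb Q' * M * emb Z') i.succ 0 = 0 := by
  simp [Matrix.mul_apply, Fin.sum_univ_succ, hM]

lemma emb_mul_mul_succ_succ (Q' Z' : Matrix (Fin m) (Fin m) ℂ)
    (M : Matrix (Fin (m+1)) (Fin (m+1)) ℂ) (i j : Fin m) :
    (emb Q' * M * emb Z') i.succ j.succ
      = (Q' * (Matrix.of fun (a b : Fin m) => M a.succ b.succ) * Z') i j := by
  simp [Matrix.mul_apply, Fin.sum_univ_succ, Finset.mul_sum, Finset.sum_mul]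

/-- Generalized Schur form: any pencil can be simultaneously triangularized by unitaries. -/
lemma genSchur : ∀ (k : ℕ) (S T : Matrix (Fin k) (Fin k) ℂ),
    ∃ Q Z : Matrix (Fin k) (Fin k) ℂ,
      Q ∈ Matrix.unitaryGroup (Fin k) ℂ ∧ Z ∈ Matrix.unitaryGroup (Fin k) ℂ ∧
      (Q * S * Z).BlockTriangular id ∧ (Q * T * Z).BlockTriangular id := by
  intro k
  induction k with
  | zero =>
    intro S T
    exact ⟨1, 1, Submonoid.one_mem _, Submonoid.one_mem _,
      fun i => i.elim0, fun i => i.elim0⟩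
  | succ m ih =>
    intro S T
    obtain ⟨Q₁, Z₁, hQ₁, hZ₁, hcol⟩ := exists_firstcol S T
    set M := Q₁ * S * Z₁ with hMdef
    set N := Q₁ * T * Z₁ with hNdef
    have hMcol : ∀ i : Fin m, M i.succ 0 = 0 := fun i => (hcol i.succ (Fin.succ_ne_zero i)).1
    have hNcol : ∀ i : Fin m, N i.succ 0 = 0 := fun i => (hcol i.succ (Fin.succ_ne_zero i)).2
    obtain ⟨Q', Z', hQ', hZ', hMt, hNt⟩ :=
      ih (Matrix.of fun (a b : Fin m) => M a.succ b.succ)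
        (Matrix.of fun (a b : Fin m) => N a.succ b.succ)
    refine ⟨emb Q' * Q₁, Z₁ * emb Z', mul_mem (emb_mem hQ') hQ₁, mul_mem hZ₁ (emb_mem hZ'),
      ?_, ?_⟩
    · have hEq : emb Q' * Q₁ * S * (Z₁ * emb Z') = emb Q' * M * emb Z' := by
        rw [hMdef]; noncomm_ring
      rw [hEq]
      intro i j hij
      rcases Fin.eq_zero_or_eq_succ i with rfl | ⟨i', rfl⟩
      · exact absurd hij (Fin.not_lt_zero _)
      · rcases Fin.eq_zero_or_eq_succ j with rfl | ⟨j', rfl⟩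
        · exact emb_mul_mul_succ_zero Q' Z' M hMcol i'
        · rw [emb_mul_mul_succ_succ]
          exact hMt (Fin.succ_lt_succ_iff.mp hij)
    · have hEq : emb Q' * Q₁ * T * (Z₁ * emb Z') = emb Q' * N * emb Z' := by
        rw [hNdef]; noncomm_ring
      rw [hEq]
      intro i j hij
      rcases Fin.eq_zero_or_eq_succ i with rfl | ⟨i', rfl⟩
      · exact absurd hij (Fin.not_lt_zero _)
      · rcases Fin.eq_zero_or_eq_succ j with rfl | ⟨j', rfl⟩
        · exact emb_mul_mul_succ_zero Q' Z' N hNcol i'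
        · rw [emb_mul_mul_succ_succ]
          exact hNt (Fin.succ_lt_succ_iff.mp hij)

/-! ### Pencil determinant lemmas -/

lemma pencilPoly_eq (S T : Matrix (Fin n) (Fin n) ℂ) :
    pencilPoly S T = S.map C + (X : ℂ[X]) • T.map C := by
  ext i j
  simp [pencilPoly, Matrix.map_apply]

lemma pencilPoly_mul (Q Z S T : Matrix (Fin n) (Fin n) ℂ) :
    pencilPoly (Q * S * Z) (Q * T * Z)
      = Q.map C * pencilPoly S T * Z.map C := by
  rw [pencilPoly_eq, pencilPoly_eq]
  rw [Matrix.map_mul (f := (C : ℂ →+* ℂ[X])), Matrix.map_mul (f := (C : ℂ →+* ℂ[X])),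
    Matrix.map_mul (f := (C : ℂ →+* ℂ[X])), Matrix.map_mul (f := (C : ℂ →+* ℂ[X]))]
  rw [Matrix.mul_add, Matrix.add_mul]
  congr 1
  rw [Matrix.mul_smul, Matrix.smul_mul]

lemma det_map_ne_zero {Q : Matrix (Fin n) (Fin n) ℂ}
    (hQ : Q ∈ Matrix.unitaryGroup (Fin n) ℂ) : (Q.map C).det ≠ 0 := by
  rw [← RingHom.mapMatrix_apply, ← RingHom.map_det]
  simp only [ne_eq, Polynomial.C_eq_zero]
  exact Matrix.det_ne_zero_of_right_inverse ((Matrix.mem_unitaryGroup_iff).mp hQ)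

lemma pencil_det_unitary_iff {Q Z : Matrix (Fin n) (Fin n) ℂ}
    (hQ : Q ∈ Matrix.unitaryGroup (Fin n) ℂ) (hZ : Z ∈ Matrix.unitaryGroup (Fin n) ℂ)
    (S T : Matrix (Fin n) (Fin n) ℂ) :
    (pencilPoly (Q * S * Z) (Q * T * Z)).det = 0 ↔ (pencilPoly S T).det = 0 := by
  rw [pencilPoly_mul, Matrix.det_mul, Matrix.det_mul, mul_eq_zero, mul_eq_zero]
  constructor
  · rintro ((h | h) | h)
    · exact absurd h (det_map_ne_zero hQ)
    · exact h
    · exact absurd h (det_map_ne_zero hZ)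
  · intro h; exact Or.inl (Or.inr h)

lemma pencil_blockTriangular {M N : Matrix (Fin n) (Fin n) ℂ}
    (hM : M.BlockTriangular id) (hN : N.BlockTriangular id) :
    (pencilPoly M N).BlockTriangular id := by
  intro i j hij
  simp [pencilPoly, hM hij, hN hij]

lemma pencil_det_triangular {M N : Matrix (Fin n) (Fin n) ℂ}
    (hM : M.BlockTriangular id) (hN : N.BlockTriangular id) :
    (pencilPoly M N).det = ∏ i, (C (M i i) + X * C (N i i)) := by
  rw [Matrix.det_of_upperTriangular (pencil_blockTriangular hM hN)]
  rfl

lemma diag_pair_zero {M N : Matrix (Fin n) (Fin n) ℂ}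
    (hM : M.BlockTriangular id) (hN : N.BlockTriangular id)
    (hdet : (pencilPoly M N).det = 0) : ∃ i, M i i = 0 ∧ N i i = 0 := by
  rw [pencil_det_triangular hM hN] at hdet
  obtain ⟨i, _, hi⟩ := Finset.prod_eq_zero_iff.mp hdet
  refine ⟨i, ?_, ?_⟩
  · have := congrArg (fun p => Polynomial.coeff p 0) hi
    simpa using this
  · have := congrArg (fun p => Polynomial.coeff p 1) hi
    simpa using this

lemma det_zero_of_diag_pair {M N : Matrix (Fin n) (Fin n) ℂ}
    (hM : M.BlockTriangular id) (hN : N.BlockTriangular id)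
    {i : Fin n} (h1 : M i i = 0) (h2 : N i i = 0) : (pencilPoly M N).det = 0 := by
  rw [pencil_det_triangular hM hN]
  exact Finset.prod_eq_zero (Finset.mem_univ i) (by simp [h1, h2])

/-! ### Frobenius norm lemmas -/

noncomputable def frobSq (M : Matrix (Fin n) (Fin n) ℂ) : ℝ := ∑ i, ∑ j, ‖M i j‖ ^ 2

lemma frobSq_eq_trace (M : Matrix (Fin n) (Fin n) ℂ) :
    (frobSq M : ℂ) = Matrix.trace (Mᴴ * M) := by
  rw [Matrix.trace]
  push_cast [frobSq]
  rw [Finset.sum_comm]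
  refine Finset.sum_congr rfl fun j _ => ?_
  rw [Matrix.diag_apply, Matrix.mul_apply]
  refine Finset.sum_congr rfl fun i _ => ?_
  rw [Matrix.conjTranspose_apply]
  rw [(by rfl : star (M i j) = (starRingEnd ℂ) (M i j)), ← Complex.normSq_eq_conj_mul_self]
  rw [Complex.normSq_eq_norm_sq]
  norm_cast

lemma frobSq_unitary_left {Q : Matrix (Fin n) (Fin n) ℂ}
    (hQ : Q ∈ Matrix.unitaryGroup (Fin n) ℂ) (M : Matrix (Fin n) (Fin n) ℂ) :
    frobSq (Q * M) = frobSq M := by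
  have h : ((frobSq (Q * M) : ℂ)) = (frobSq M : ℂ) := by
    rw [frobSq_eq_trace, frobSq_eq_trace, Matrix.conjTranspose_mul, Matrix.mul_assoc,
      ← Matrix.mul_assoc Qᴴ Q M,
      (show Qᴴ * Q = 1 from (Matrix.mem_unitaryGroup_iff').mp hQ), Matrix.one_mul]
  exact_mod_cast h

lemma frobSq_conjTranspose (M : Matrix (Fin n) (Fin n) ℂ) : frobSq Mᴴ = frobSq M := by
  rw [frobSq, frobSq, Finset.sum_comm]
  refine Finset.sum_congr rfl fun i _ => Finset.sum_congr rfl fun j _ => ?_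
  simp [Matrix.conjTranspose_apply]

lemma frobSq_unitary_right {Z : Matrix (Fin n) (Fin n) ℂ}
    (hZ : Z ∈ Matrix.unitaryGroup (Fin n) ℂ) (M : Matrix (Fin n) (Fin n) ℂ) :
    frobSq (M * Z) = frobSq M := by
  rw [← frobSq_conjTranspose (M * Z), Matrix.conjTranspose_mul,
    frobSq_unitary_left (show Zᴴ ∈ Matrix.unitaryGroup (Fin n) ℂ from Unitary.star_mem hZ),
    frobSq_conjTranspose]

lemma frobSq_unitary {Q Z : Matrix (Fin n) (Fin n) ℂ}
    (hQ : Q ∈ Matrix.unitaryGroup (Fin n) ℂ) (hZ : Z ∈ Matrix.unitaryGroup (Fin n) ℂ)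
    (M : Matrix (Fin n) (Fin n) ℂ) : frobSq (Q * M * Z) = frobSq M := by
  rw [frobSq_unitary_right hZ, frobSq_unitary_left hQ]

lemma frobSq_nonneg (M : Matrix (Fin n) (Fin n) ℂ) : 0 ≤ frobSq M :=
  Finset.sum_nonneg fun _ _ => Finset.sum_nonneg fun _ _ => sq_nonneg _

lemma pencilNormSq_eq (A B : Matrix (Fin n) (Fin n) ℂ) :
    pencilNormSq A B = frobSq A + frobSq B := rfl

lemma sandwich {Q Z : Matrix (Fin n) (Fin n) ℂ}
    (hQ : Q ∈ Matrix.unitaryGroup (Fin n) ℂ) (hZ : Z ∈ Matrix.unitaryGroup (Fin n) ℂ)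
    (X : Matrix (Fin n) (Fin n) ℂ) : Q * (star Q * X * star Z) * Z = X := by
  have h1 : Q * star Q = 1 := (Matrix.mem_unitaryGroup_iff).mp hQ
  have h2 : star Z * Z = 1 := (Matrix.mem_unitaryGroup_iff').mp hZ
  calc Q * (star Q * X * star Z) * Z = (Q * star Q) * X * (star Z * Z) := by noncomm_ring
    _ = X := by rw [h1, h2, Matrix.one_mul, Matrix.mul_one]


lemma sum_lower_add_diag_le {n : ℕ} (g : Fin n → Fin n → ℝ) (hg : ∀ i j, 0 ≤ g i j)
    (i₀ : Fin n) :
    (∑ i, ∑ j, if j < i then g i j else 0) + g i₀ i₀ ≤ ∑ i, ∑ j, g i j := by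
  have hsplit : ∀ i j : Fin n, g i j
      = (if j < i then g i j else 0) + (if ¬ j < i then g i j else 0) := by
    intro i j
    by_cases h : j < i <;> simp [h]
  have h1 : ∑ i, ∑ j, g i j
      = (∑ i, ∑ j, if j < i then g i j else 0) + ∑ i, ∑ j, if ¬ j < i then g i j else 0 := by
    rw [← Finset.sum_add_distrib]
    refine Finset.sum_congr rfl fun i _ => ?_
    rw [← Finset.sum_add_distrib]
    exact Finset.sum_congr rfl fun j _ => hsplit i j
  rw [h1]
  have h2 : g i₀ i₀ ≤ ∑ i, ∑ j, if ¬ j < i then g i j else 0 := by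
    have h3 : g i₀ i₀ ≤ ∑ j, if ¬ j < i₀ then g i₀ j else 0 := by
      have := Finset.single_le_sum (f := fun j => if ¬ j < i₀ then g i₀ j else 0)
        (fun j _ => by by_cases h : j < i₀ <;> simp [h, hg]) (Finset.mem_univ i₀)
      simpa using this
    exact h3.trans (Finset.single_le_sum (f := fun i => ∑ j, if ¬ j < i then g i j else 0)
      (fun i _ => Finset.sum_nonneg fun j _ => by by_cases h : j < i <;> simp [h, hg])
      (Finset.mem_univ i₀))
  linarith

lemma sum_diag_ite {n : ℕ} (g : Fin n → Fin n → ℝ) (i₀ : Fin n) :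
    (∑ i, ∑ j, if i = i₀ ∧ j = i₀ then g i j else 0) = g i₀ i₀ := by
  have h : ∀ i j : Fin n, (if i = i₀ ∧ j = i₀ then g i j else 0)
      = if i = i₀ then (if j = i₀ then g i j else 0) else 0 := by
    intro i j
    by_cases h1 : i = i₀ <;> by_cases h2 : j = i₀ <;> simp [h1, h2]
  have h1 : ∀ i : Fin n, (∑ j, if i = i₀ ∧ j = i₀ then g i j else 0)
      = if i = i₀ then g i i₀ else 0 := by
    intro i
    by_cases hi : i = i₀
    · simp only [hi, true_and, if_true]
      exact (Finset.sum_ite_eq' Finset.univ i₀ (fun j => g i₀ j)).trans (by simp)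
    · simp [hi]
  simp only [h1]
  exact (Finset.sum_ite_eq' Finset.univ i₀ (fun i => g i i₀)).trans (by simp)

end Aux

/-- The minimum of the squared distance to the singular pencils equals the minimum of
the objective function `f` over `U(n) × U(n)`. -/
theorem nearest_singular_pencil_eq_min_over_unitary {n : ℕ} (hn : 0 < n)
    (A B : Matrix (Fin n) (Fin n) ℂ) :
    sInf {d : ℝ | ∃ S T : Matrix (Fin n) (Fin n) ℂ,
        (pencilPoly S T).det = 0 ∧ d = pencilNormSq (A - S) (B - T)} =
    sInf {d : ℝ | ∃ Q Z : Matrix (Fin n) (Fin n) ℂ,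
        Q ∈ Matrix.unitaryGroup (Fin n) ℂ ∧ Z ∈ Matrix.unitaryGroup (Fin n) ℂ ∧
        d = objFun hn A B Q Z} := by
  classical
  apply le_antisymm
  · -- csInf L ≤ csInf R
    apply le_csInf
    · exact ⟨objFun hn A B 1 1, 1, 1, one_mem _, one_mem _, rfl⟩
    rintro r ⟨Q, Z, hQ, hZ, rfl⟩
    have hLbd : BddBelow {d : ℝ | ∃ S T : Matrix (Fin n) (Fin n) ℂ,
        (pencilPoly S T).det = 0 ∧ d = pencilNormSq (A - S) (B - T)} := by
      refine ⟨0, ?_⟩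
      rintro d ⟨S, T, _, rfl⟩
      rw [pencilNormSq_eq]
      exact add_nonneg (frobSq_nonneg _) (frobSq_nonneg _)
    apply csInf_le hLbd
    -- construct the nearest singular pencil from Q, Z
    set M := Q * A * Z with hM
    set N := Q * B * Z with hN
    obtain ⟨i₀, -, hinf⟩ := Finset.exists_mem_eq_inf' (⟨⟨0, hn⟩, Finset.mem_univ _⟩ :
      (Finset.univ : Finset (Fin n)).Nonempty)
      (fun i => ‖M i i‖ ^ 2 + ‖N i i‖ ^ 2)
    set E : Matrix (Fin n) (Fin n) ℂ :=
      Matrix.of fun i j => if j < i ∨ (i = i₀ ∧ j = i₀) then M i j else 0 with hE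
    set F : Matrix (Fin n) (Fin n) ℂ :=
      Matrix.of fun i j => if j < i ∨ (i = i₀ ∧ j = i₀) then N i j else 0 with hF
    refine ⟨star Q * (M - E) * star Z, star Q * (N - F) * star Z, ?_, ?_⟩
    · -- singularity
      have hQSZ : Q * (star Q * (M - E) * star Z) * Z = M - E := sandwich hQ hZ _
      have hQTZ : Q * (star Q * (N - F) * star Z) * Z = N - F := sandwich hQ hZ _
      have htriM : (M - E).BlockTriangular id := by
        intro i j hij
        have hij' : j < i := hij
        simp [hE, Matrix.sub_apply, if_pos (Or.inl hij')]
      have htriN : (N - F).BlockTriangular id := by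
        intro i j hij
        have hij' : j < i := hij
        simp [hF, Matrix.sub_apply, if_pos (Or.inl hij')]
      have hc : (i₀ < i₀ ∨ (i₀ = i₀ ∧ i₀ = i₀)) := Or.inr ⟨rfl, rfl⟩
      have hdM : (M - E) i₀ i₀ = 0 := by
        simp [hE, Matrix.sub_apply, hc]
      have hdN : (N - F) i₀ i₀ = 0 := by
        simp [hF, Matrix.sub_apply, hc]
      have hiff := pencil_det_unitary_iff hQ hZ
        (star Q * (M - E) * star Z) (star Q * (N - F) * star Z)
      rw [hQSZ, hQTZ] at hiff
      exact hiff.mp (det_zero_of_diag_pair htriM htriN hdM hdN)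
    · -- value
      have hAS : Q * (A - (star Q * (M - E) * star Z)) * Z = E := by
        rw [Matrix.mul_sub, Matrix.sub_mul, sandwich hQ hZ]
        rw [← hM]
        abel
      have hBT : Q * (B - (star Q * (N - F) * star Z)) * Z = F := by
        rw [Matrix.mul_sub, Matrix.sub_mul, sandwich hQ hZ]
        rw [← hN]
        abel
      rw [pencilNormSq_eq, ← frobSq_unitary hQ hZ (A - _), ← frobSq_unitary hQ hZ (B - _),
        hAS, hBT]
      have hsplitE : frobSq E
          = (∑ i, ∑ j, if j < i then ‖M i j‖ ^ 2 else 0) + ‖M i₀ i₀‖ ^ 2 := by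
        rw [frobSq, ← sum_diag_ite (fun i j => ‖M i j‖ ^ 2) i₀, ← Finset.sum_add_distrib]
        refine Finset.sum_congr rfl fun i _ => ?_
        rw [← Finset.sum_add_distrib]
        refine Finset.sum_congr rfl fun j _ => ?_
        by_cases h1 : j < i
        · have h2 : ¬ (i = i₀ ∧ j = i₀) := by
            rintro ⟨rfl, rfl⟩; exact lt_irrefl _ h1
          simp [hE, h1, h2]
        · by_cases h2 : i = i₀ ∧ j = i₀ <;> simp [hE, h1, h2]
      have hsplitF : frobSq F
          = (∑ i, ∑ j, if j < i then ‖N i j‖ ^ 2 else 0) + ‖N i₀ i₀‖ ^ 2 := by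
        rw [frobSq, ← sum_diag_ite (fun i j => ‖N i j‖ ^ 2) i₀, ← Finset.sum_add_distrib]
        refine Finset.sum_congr rfl fun i _ => ?_
        rw [← Finset.sum_add_distrib]
        refine Finset.sum_congr rfl fun j _ => ?_
        by_cases h1 : j < i
        · have h2 : ¬ (i = i₀ ∧ j = i₀) := by
            rintro ⟨rfl, rfl⟩; exact lt_irrefl _ h1
          simp [hF, h1, h2]
        · by_cases h2 : i = i₀ ∧ j = i₀ <;> simp [hF, h1, h2]
      rw [hsplitE, hsplitF, objFun, ← hM, ← hN, hinf]
      have hmerge : (∑ i, ∑ j, if j < i then ‖M i j‖ ^ 2 + ‖N i j‖ ^ 2 else 0)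
          = (∑ i, ∑ j, if j < i then ‖M i j‖ ^ 2 else 0)
            + ∑ i, ∑ j, if j < i then ‖N i j‖ ^ 2 else 0 := by
        rw [← Finset.sum_add_distrib]
        refine Finset.sum_congr rfl fun i _ => ?_
        rw [← Finset.sum_add_distrib]
        refine Finset.sum_congr rfl fun j _ => ?_
        by_cases h : j < i <;> simp [h]
      rw [hmerge]
      ring
  · -- csInf R ≤ csInf L
    apply le_csInf
    · refine ⟨pencilNormSq (A - 0) (B - 0), 0, 0, ?_, rfl⟩
      have h0 : pencilPoly (0 : Matrix (Fin n) (Fin n) ℂ) 0 = 0 := by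
        ext i j; simp [pencilPoly]
      rw [h0]
      have : Nonempty (Fin n) := ⟨⟨0, hn⟩⟩
      exact Matrix.det_zero
    rintro l ⟨S, T, hsing, rfl⟩
    have hRbd : BddBelow {d : ℝ | ∃ Q Z : Matrix (Fin n) (Fin n) ℂ,
        Q ∈ Matrix.unitaryGroup (Fin n) ℂ ∧ Z ∈ Matrix.unitaryGroup (Fin n) ℂ ∧
        d = objFun hn A B Q Z} := by
      refine ⟨0, ?_⟩
      rintro d ⟨Q, Z, hQ, hZ, rfl⟩
      rw [objFun]
      have h1 : (0:ℝ) ≤ ∑ i, ∑ j, if j < i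
          then ‖(Q * A * Z) i j‖ ^ 2 + ‖(Q * B * Z) i j‖ ^ 2 else 0 :=
        Finset.sum_nonneg fun i _ => Finset.sum_nonneg fun j _ => by
          by_cases h : j < i
          · simp only [if_pos h]; positivity
          · simp [h]
      have h2 : (0:ℝ) ≤ Finset.univ.inf' ⟨⟨0, hn⟩, Finset.mem_univ _⟩
          (fun i => ‖(Q * A * Z) i i‖ ^ 2 + ‖(Q * B * Z) i i‖ ^ 2) :=
        Finset.le_inf' _ _ fun i _ => by positivity
      linarith
    obtain ⟨Q, Z, hQ, hZ, hMt, hNt⟩ := genSchur n S T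
    have hsing' : (pencilPoly (Q * S * Z) (Q * T * Z)).det = 0 :=
      (pencil_det_unitary_iff hQ hZ S T).mpr hsing
    obtain ⟨i₀, hd1, hd2⟩ := diag_pair_zero hMt hNt hsing'
    refine le_trans (csInf_le hRbd ⟨Q, Z, hQ, hZ, rfl⟩) ?_
    -- objFun ≤ pencilNormSq
    set E := Q * (A - S) * Z with hE
    set F := Q * (B - T) * Z with hF
    have hEeq : E = Q * A * Z - Q * S * Z := by rw [hE, Matrix.mul_sub, Matrix.sub_mul]
    have hFeq : F = Q * B * Z - Q * T * Z := by rw [hF, Matrix.mul_sub, Matrix.sub_mul]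
    have hlow : ∀ i j : Fin n, j < i →
        ‖(Q * A * Z) i j‖ ^ 2 + ‖(Q * B * Z) i j‖ ^ 2 = ‖E i j‖ ^ 2 + ‖F i j‖ ^ 2 := by
      intro i j hij
      rw [hEeq, hFeq, Matrix.sub_apply, Matrix.sub_apply, hMt hij, hNt hij, sub_zero, sub_zero]
    have hdiag : ‖(Q * A * Z) i₀ i₀‖ ^ 2 + ‖(Q * B * Z) i₀ i₀‖ ^ 2
        = ‖E i₀ i₀‖ ^ 2 + ‖F i₀ i₀‖ ^ 2 := by
      rw [hEeq, hFeq, Matrix.sub_apply, Matrix.sub_apply, hd1, hd2, sub_zero, sub_zero]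
    have hinf_le : Finset.univ.inf' ⟨⟨0, hn⟩, Finset.mem_univ _⟩
        (fun i => ‖(Q * A * Z) i i‖ ^ 2 + ‖(Q * B * Z) i i‖ ^ 2)
        ≤ ‖E i₀ i₀‖ ^ 2 + ‖F i₀ i₀‖ ^ 2 := by
      rw [← hdiag]
      exact Finset.inf'_le _ (Finset.mem_univ i₀)
    have hsum_eq : (∑ i, ∑ j, if j < i
        then ‖(Q * A * Z) i j‖ ^ 2 + ‖(Q * B * Z) i j‖ ^ 2 else 0)
        = ∑ i, ∑ j, if j < i then ‖E i j‖ ^ 2 + ‖F i j‖ ^ 2 else 0 := by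
      refine Finset.sum_congr rfl fun i _ => Finset.sum_congr rfl fun j _ => ?_
      by_cases h : j < i
      · rw [if_pos h, if_pos h, hlow i j h]
      · rw [if_neg h, if_neg h]
    have hbound := sum_lower_add_diag_le (fun i j => ‖E i j‖ ^ 2 + ‖F i j‖ ^ 2)
      (fun i j => by positivity) i₀
    have hfinal : (∑ i, ∑ j, ((‖E i j‖ ^ 2 + ‖F i j‖ ^ 2) : ℝ))
        = pencilNormSq (A - S) (B - T) := by
      rw [pencilNormSq_eq, ← frobSq_unitary hQ hZ (A - S), ← frobSq_unitary hQ hZ (B - T),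
        ← hE, ← hF, frobSq, frobSq, ← Finset.sum_add_distrib]
      refine Finset.sum_congr rfl fun i _ => ?_
      rw [← Finset.sum_add_distrib]
    rw [objFun, hsum_eq]
    calc (∑ i, ∑ j, if j < i then ‖E i j‖ ^ 2 + ‖F i j‖ ^ 2 else 0)
          + Finset.univ.inf' ⟨⟨0, hn⟩, Finset.mem_univ _⟩
            (fun i => ‖(Q * A * Z) i i‖ ^ 2 + ‖(Q * B * Z) i i‖ ^ 2)
        ≤ (∑ i, ∑ j, if j < i then ‖E i j‖ ^ 2 + ‖F i j‖ ^ 2 else 0)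
            + (‖E i₀ i₀‖ ^ 2 + ‖F i₀ i₀‖ ^ 2) := by linarith
      _ ≤ ∑ i, ∑ j, (‖E i j‖ ^ 2 + ‖F i j‖ ^ 2) := hbound
      _ = pencilNormSq (A - S) (B - T) := hfinal
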